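/- Let E ∈ K^{m×σ}, M ∈ K^{σ×σ}, s ∈ ℕ^m, δ a bound on deg of the minimal polynomial of M, and (δ_1,…,δ_m) the s-minimal degree. Then there exists a matrix P ∈ K[X]^{m×m} with deg P ≤ δ, in s-weak Popov form with s-pivot entries on the diagonal and s-pivot degree (δ_1,…,δ_m), such that every row of P is an interpolant for (E,M); moreover any such P is an s-minimal interpolation basis for (E,M). -/

import Mathlib

open Polynomial Matrix

/-- Priority comparison on pairs `(c,d)`: lexicographic on `(s_c + d, c)`. -/
def keyLt {m : ℕ} (s : Fin m → ℕ) (x y : Fin m × ℕ) : Prop :=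
  s x.1 + x.2 < s y.1 + y.2 ∨ (s x.1 + x.2 = s y.1 + y.2 ∧ x.1 < y.1)

/-- Row `(c,d)` of the priority-permuted Krylov matrix is a linear combination of the
earlier rows. -/
def DepEarlier {K : Type*} [Field K] {m σ : ℕ} (E : Matrix (Fin m) (Fin σ) K)
    (M : Matrix (Fin σ) (Fin σ) K) (s : Fin m → ℕ) (δ : ℕ) (c : Fin m) (d : ℕ) : Prop :=
  Matrix.vecMul (E c) (M ^ d) ∈
    Submodule.span K
      ((fun y : Fin m × ℕ => Matrix.vecMul (E y.1) (M ^ y.2)) ''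
        {y | y.2 ≤ δ ∧ keyLt s y (c, d)})

/-- `dm` is the `s`-minimal degree of `(E,M)`. -/
def IsMinDeg {K : Type*} [Field K] {m σ : ℕ} (E : Matrix (Fin m) (Fin σ) K)
    (M : Matrix (Fin σ) (Fin σ) K) (s : Fin m → ℕ) (δ : ℕ) (dm : Fin m → ℕ) : Prop :=
  ∀ c, DepEarlier E M s δ c (dm c) ∧ ∀ d, d < dm c → ¬ DepEarlier E M s δ c d

/-- The `s`-row degree of a row vector `p`. -/
noncomputable def rowDegVec {K : Type*} [Field K] {m : ℕ} (s : Fin m → ℕ)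
    (p : Fin m → Polynomial K) : WithBot ℕ :=
  Finset.univ.sup fun j => (p j).degree + (s j : WithBot ℕ)

/-- `c` is the `s`-pivot index of `p`. -/
noncomputable def IsPivotIdx {K : Type*} [Field K] {m : ℕ} (s : Fin m → ℕ)
    (p : Fin m → Polynomial K) (c : Fin m) : Prop :=
  ((p c).degree + (s c : WithBot ℕ) = rowDegVec s p) ∧
    ∀ c', ((p c').degree + (s c' : WithBot ℕ) = rowDegVec s p) → c' ≤ c

/-- The `s`-row degree of row `i` of `P`. -/
noncomputable def rowDegW {K : Type*} [Field K] {k m : ℕ} (s : Fin m → ℕ)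
    (P : Matrix (Fin k) (Fin m) (Polynomial K)) (i : Fin k) : WithBot ℕ :=
  Finset.univ.sup fun j => (P i j).degree + (s j : WithBot ℕ)

/-- The `s`-leading matrix of `P`. -/
noncomputable def leadMat {K : Type*} [Field K] {k m : ℕ} (s : Fin m → ℕ)
    (P : Matrix (Fin k) (Fin m) (Polynomial K)) : Matrix (Fin k) (Fin m) K :=
  fun i j =>
    if (P i j).degree + (s j : WithBot ℕ) = rowDegW s P i then (P i j).leadingCoeff else 0

/-- `P` is `s`-reduced. -/
def IsReducedS {K : Type*} [Field K] {k m : ℕ} (s : Fin m → ℕ)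
    (P : Matrix (Fin k) (Fin m) (Polynomial K)) : Prop :=
  (leadMat s P).rank = k

/-- `p` is an interpolant for `(E,M)`. -/
def IsInterpolant {K : Type*} [Field K] {m σ : ℕ} (E : Matrix (Fin m) (Fin σ) K)
    (M : Matrix (Fin σ) (Fin σ) K) (p : Fin m → Polynomial K) : Prop :=
  ∑ c, Matrix.vecMul (E c) (Polynomial.aeval M (p c)) = 0

/-- The rows of `P` form a basis of the `K[X]`-module of interpolants for `(E,M)`. -/
def IsInterpBasis {K : Type*} [Field K] {m σ : ℕ} (E : Matrix (Fin m) (Fin σ) K)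
    (M : Matrix (Fin σ) (Fin σ) K) (P : Matrix (Fin m) (Fin m) (Polynomial K)) : Prop :=
  LinearIndependent (Polynomial K) (fun i => P i) ∧
    ∀ q : Fin m → Polynomial K,
      IsInterpolant E M q ↔ q ∈ Submodule.span (Polynomial K) (Set.range fun i => P i)


section helpers
variable {K : Type*} [Field K] {m σ : ℕ}

lemma vecMul_fsum {ι : Type*} (t : Finset ι) (v : Fin σ → K) (A : ι → Matrix (Fin σ) (Fin σ) K) :
    v ᵥ* (∑ i ∈ t, A i) = ∑ i ∈ t, v ᵥ* (A i) := by
  classical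
  induction t using Finset.induction with
  | empty => simp
  | insert _ _ h ih => simp [Finset.sum_insert h, Matrix.vecMul_add, ih]

lemma vecMul_smul' (v : Fin σ → K) (a : K) (A : Matrix (Fin σ) (Fin σ) K) :
    v ᵥ* (a • A) = a • (v ᵥ* A) := by
  ext j
  simp [Matrix.vecMul, dotProduct, Finset.mul_sum, mul_left_comm]

lemma vecMul_aeval (v : Fin σ → K) (M : Matrix (Fin σ) (Fin σ) K) (p : Polynomial K)
    {N : ℕ} (hN : p.natDegree < N) :
    v ᵥ* (aeval M p) = ∑ d ∈ Finset.range N, p.coeff d • (v ᵥ* (M ^ d)) := by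
  rw [aeval_eq_sum_range' hN, vecMul_fsum]
  refine Finset.sum_congr rfl fun d _ => ?_
  rw [vecMul_smul']


variable (E : Matrix (Fin m) (Fin σ) K) (M : Matrix (Fin σ) (Fin σ) K)

lemma keyLt_trans {s : Fin m → ℕ} {x y z : Fin m × ℕ} (h1 : keyLt s x y) (h2 : keyLt s y z) :
    keyLt s x z := by
  rcases h1 with h1 | ⟨h1, h1'⟩ <;> rcases h2 with h2 | ⟨h2, h2'⟩
  · exact Or.inl (h1.trans h2)
  · exact Or.inl (h2 ▸ h1)
  · exact Or.inl (h1 ▸ h2)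
  · exact Or.inr ⟨h1.trans h2, h1'.trans h2'⟩

lemma fsum_vecMul {ι : Type*} (t : Finset ι) (v : ι → Fin σ → K) (A : Matrix (Fin σ) (Fin σ) K) :
    (∑ i ∈ t, v i) ᵥ* A = ∑ i ∈ t, (v i) ᵥ* A := by
  classical
  induction t using Finset.induction with
  | empty => simp
  | insert _ _ h ih => simp [Finset.sum_insert h, Matrix.add_vecMul, ih]

/-- The submodule of interpolants. -/
noncomputable def interpSub : Submodule (Polynomial K) (Fin m → Polynomial K) where
  carrier := {q | IsInterpolant E M q}
  add_mem' := by
    intro a b ha hb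
    simp only [Set.mem_setOf_eq, IsInterpolant] at *
    simp only [Pi.add_apply, map_add, Matrix.vecMul_add, Finset.sum_add_distrib, ha, hb, add_zero]
  zero_mem' := by
    simp [Set.mem_setOf_eq, IsInterpolant]
  smul_mem' := by
    intro f q hq
    simp only [Set.mem_setOf_eq, IsInterpolant] at *
    have : ∀ c, (E c) ᵥ* (aeval M (f * q c)) = ((E c) ᵥ* (aeval M (q c))) ᵥ* (aeval M f) := by
      intro c
      rw [mul_comm f (q c), _root_.map_mul, Matrix.vecMul_vecMul]
    simp only [Pi.smul_apply, smul_eq_mul, this]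
    rw [← fsum_vecMul, hq, Matrix.zero_vecMul]

lemma mem_interpSub {q : Fin m → Polynomial K} : q ∈ interpSub E M ↔ IsInterpolant E M q :=
  Iff.rfl

end helpers

section spanlem
variable {K : Type*} [Field K] {m σ : ℕ}
variable (E : Matrix (Fin m) (Fin σ) K) (M : Matrix (Fin σ) (Fin σ) K)

lemma pow_eq_lower {d : ℕ} (hd : (minpoly K M).natDegree ≤ d) :
    M ^ d = ∑ e ∈ Finset.range (minpoly K M).natDegree,
      (-(minpoly K M).coeff e) • M ^ (d - (minpoly K M).natDegree + e) := by
  set D := (minpoly K M).natDegree with hD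
  have hint : IsIntegral K M := IsIntegral.of_finite K M
  have hmon := minpoly.monic hint
  have h0 : (M : Matrix (Fin σ) (Fin σ) K) ^ D
      = ∑ e ∈ Finset.range D, (-(minpoly K M).coeff e) • M ^ e := by
    have h := minpoly.aeval K M
    rw [aeval_eq_sum_range' (lt_add_one _)] at h
    rw [Finset.sum_range_succ, ← hD, hmon.coeff_natDegree, one_smul] at h
    have h2 := eq_neg_of_add_eq_zero_right h
    rw [h2, ← Finset.sum_neg_distrib]
    exact Finset.sum_congr rfl fun e _ => by rw [neg_smul]
  calc M ^ d = M ^ (d - D) * M ^ D := by rw [← pow_add, Nat.sub_add_cancel hd]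
  _ = _ := by
      rw [h0, Finset.mul_sum]
      refine Finset.sum_congr rfl fun e _ => ?_
      rw [mul_smul_comm, ← pow_add]

lemma row_mem_span {δ : ℕ} (hδ : (minpoly K M).natDegree ≤ δ) (s : Fin m → ℕ) :
    ∀ (d' : ℕ) (c' : Fin m) (z : Fin m × ℕ), keyLt s (c', d') z →
      (E c') ᵥ* (M ^ d') ∈ Submodule.span K
        ((fun y : Fin m × ℕ => (E y.1) ᵥ* (M ^ y.2)) '' {y | y.2 ≤ δ ∧ keyLt s y z}) := by
  intro d'
  induction d' using Nat.strong_induction_on with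
  | _ d' ih =>
    intro c' z hz
    by_cases hle : d' ≤ δ
    · exact Submodule.subset_span ⟨(c', d'), ⟨hle, hz⟩, rfl⟩
    · push_neg at hle
      have hD : (minpoly K M).natDegree ≤ d' := hδ.trans hle.le
      rw [pow_eq_lower M hD, vecMul_fsum]
      refine Submodule.sum_mem _ fun e he => ?_
      rw [vecMul_smul']
      refine Submodule.smul_mem _ _ ?_
      have he' := Finset.mem_range.mp he
      have hlt : d' - (minpoly K M).natDegree + e < d' := by omega
      refine ih _ hlt c' z (keyLt_trans ?_ hz)
      exact Or.inl (by show s c' + _ < s c' + _; omega)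

end spanlem

section core
variable {K : Type*} [Field K] {m σ : ℕ}
variable (E : Matrix (Fin m) (Fin σ) K) (M : Matrix (Fin σ) (Fin σ) K)

lemma degree_add_s {p : Polynomial K} (hp : p ≠ 0) (k : ℕ) :
    p.degree + (k : WithBot ℕ) = ((p.natDegree + k : ℕ) : WithBot ℕ) := by
  rw [degree_eq_natDegree hp]
  push_cast
  rfl

lemma rowDegVec_ne_bot {s : Fin m → ℕ} {q : Fin m → Polynomial K} {j : Fin m} (hj : q j ≠ 0) :
    rowDegVec s q ≠ ⊥ := by
  have h1 : (q j).degree + (s j : WithBot ℕ) ≤ rowDegVec s q :=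
    Finset.le_sup (f := fun j => (q j).degree + (s j : WithBot ℕ)) (Finset.mem_univ j)
  rw [degree_add_s hj] at h1
  intro h
  rw [h, le_bot_iff] at h1
  exact (WithBot.coe_ne_bot) h1

/-- entry at pivot index is nonzero -/
lemma pivot_entry_ne_zero {s : Fin m → ℕ} {q : Fin m → Polynomial K} {c : Fin m}
    (hq0 : q ≠ 0) (hc : IsPivotIdx s q c) : q c ≠ 0 := by
  intro h0
  obtain ⟨j, hj⟩ : ∃ j, q j ≠ 0 := by
    by_contra hall
    push_neg at hall
    exact hq0 (funext hall)
  have := hc.1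
  rw [h0] at this
  simp only [degree_zero, WithBot.bot_add] at this
  exact rowDegVec_ne_bot hj this.symm

/-- monomials of a row vector other than the pivot's leading one have smaller key -/
lemma keyLt_of_coeff_ne {s : Fin m → ℕ} {q : Fin m → Polynomial K} {c : Fin m}
    (hc : IsPivotIdx s q c) (hqc : q c ≠ 0) {c' : Fin m} {d : ℕ}
    (hcoeff : (q c').coeff d ≠ 0) (hne : (c', d) ≠ (c, (q c).natDegree)) :
    keyLt s (c', d) (c, (q c).natDegree) := by
  have hqc' : q c' ≠ 0 := fun h => hcoeff (by simp [h])
  have hdle : d ≤ (q c').natDegree := le_natDegree_of_ne_zero hcoeff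
  have h1 : (q c').degree + (s c' : WithBot ℕ) ≤ rowDegVec s q :=
    Finset.le_sup (f := fun j => (q j).degree + (s j : WithBot ℕ)) (Finset.mem_univ c')
  have hrd : rowDegVec s q = (((q c).natDegree + s c : ℕ) : WithBot ℕ) := by
    rw [← hc.1, degree_add_s hqc]
  rw [hrd, degree_add_s hqc'] at h1
  have h2 : (q c').natDegree + s c' ≤ (q c).natDegree + s c := by exact_mod_cast h1
  rcases lt_or_eq_of_le (show s c' + d ≤ s c + (q c).natDegree by omega) with h | h
  · exact Or.inl (by show s c' + d < s c + _; exact h)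
  · -- equality: then d = natDegree (q c') and c' achieves the sup
    have hd : d = (q c').natDegree := by omega
    have hach : (q c').degree + (s c' : WithBot ℕ) = rowDegVec s q := by
      rw [hrd, degree_add_s hqc']
      exact_mod_cast (show (q c').natDegree + s c' = (q c).natDegree + s c by omega)
    have hle : c' ≤ c := hc.2 c' hach
    rcases lt_or_eq_of_le hle with h' | h'
    · exact Or.inr ⟨h, h'⟩
    · exact absurd (Prod.ext h' (by rw [hd, h'])) hne


lemma interpolant_sum_rows {q : Fin m → Polynomial K} (hq : IsInterpolant E M q)
    {N : ℕ} (hN : ∀ c', (q c').natDegree < N) :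
    ∑ y ∈ Finset.univ ×ˢ Finset.range N,
      (q y.1).coeff y.2 • ((E y.1) ᵥ* (M ^ y.2)) = 0 := by
  rw [Finset.sum_product]
  rw [IsInterpolant] at hq
  rw [← hq]
  exact Finset.sum_congr rfl fun c' _ => (vecMul_aeval (E c') M (q c') (hN c')).symm

/-- No nonzero interpolant has a pivot with degree below the minimal degree. -/
lemma pivot_natDegree_ge {δ : ℕ} (hδ : (minpoly K M).natDegree ≤ δ) {s : Fin m → ℕ}
    {dm : Fin m → ℕ} (hdm : IsMinDeg E M s δ dm)
    {q : Fin m → Polynomial K} (hq : IsInterpolant E M q) (hq0 : q ≠ 0)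
    {c : Fin m} (hc : IsPivotIdx s q c) : dm c ≤ (q c).natDegree := by
  by_contra hlt
  push_neg at hlt
  have hqc : q c ≠ 0 := pivot_entry_ne_zero hq0 hc
  set e := (q c).natDegree with he
  set W := Submodule.span K
      ((fun y : Fin m × ℕ => Matrix.vecMul (E y.1) (M ^ y.2)) ''
        {y | y.2 ≤ δ ∧ keyLt s y (c, e)}) with hW
  -- choose N
  set N := 1 + Finset.univ.sup (fun c' => (q c').natDegree) with hNdef
  have hN : ∀ c', (q c').natDegree < N := fun c' =>
    Nat.lt_one_add_iff.mpr (Finset.le_sup (f := fun c' => (q c').natDegree) (Finset.mem_univ c'))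
  have hsum := interpolant_sum_rows E M hq hN
  have hmemprod : (c, e) ∈ Finset.univ ×ˢ Finset.range N :=
    Finset.mem_product.mpr ⟨Finset.mem_univ _, Finset.mem_range.mpr (hN c)⟩
  rw [← Finset.add_sum_erase _ _ hmemprod] at hsum
  have hrest : ∑ y ∈ (Finset.univ ×ˢ Finset.range N).erase (c, e),
      (q y.1).coeff y.2 • ((E y.1) ᵥ* (M ^ y.2)) ∈ W := by
    refine Submodule.sum_mem _ fun y hy => ?_
    by_cases h0 : (q y.1).coeff y.2 = 0
    · rw [h0, zero_smul]; exact Submodule.zero_mem _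
    · refine Submodule.smul_mem _ _ ?_
      exact row_mem_span E M hδ s y.2 y.1 (c, e)
        (keyLt_of_coeff_ne hc hqc h0 (by simpa using Finset.ne_of_mem_erase hy))
  have hlead : (q c).coeff e • ((E c) ᵥ* (M ^ e)) ∈ W := by
    have : (q c).coeff e • ((E c) ᵥ* (M ^ e)) = - ∑ y ∈ (Finset.univ ×ˢ Finset.range N).erase (c, e),
        (q y.1).coeff y.2 • ((E y.1) ᵥ* (M ^ y.2)) := by
      rw [eq_neg_of_add_eq_zero_left hsum]
    rw [this]
    exact Submodule.neg_mem _ hrest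
  have hdep : DepEarlier E M s δ c e := by
    have hne : (q c).coeff e ≠ 0 := by
      rw [he]
      exact mt Polynomial.leadingCoeff_eq_zero.mp hqc
    rw [DepEarlier]
    have := Submodule.smul_mem W ((q c).coeff e)⁻¹ hlead
    rwa [smul_smul, inv_mul_cancel₀ hne, one_smul] at this
  exact (hdm c).2 e hlt hdep

lemma coeff_sumCX (a : ℕ → K) (n k : ℕ) :
    (∑ d ∈ Finset.range n, C (a d) * X ^ d).coeff k = if k < n then a k else 0 := by
  rw [finset_sum_coeff]
  simp [coeff_C_mul_X_pow, Finset.sum_ite_eq, Finset.mem_range]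

lemma keyLt_cases {s : Fin m → ℕ} {c' c : Fin m} {d e : ℕ} (h : keyLt s (c', d) (c, e)) :
    s c' + d < s c + e ∨ (s c' + d = s c + e ∧ c' < c) := h

lemma dm_le {δ : ℕ} (hδ : (minpoly K M).natDegree ≤ δ) {s : Fin m → ℕ}
    {dm : Fin m → ℕ} (hdm : IsMinDeg E M s δ dm) (c : Fin m) : dm c ≤ δ := by
  by_contra h
  push_neg at h
  have hdep : DepEarlier E M s δ c ((minpoly K M).natDegree) := by
    rw [DepEarlier, pow_eq_lower M le_rfl, vecMul_fsum]
    refine Submodule.sum_mem _ fun e he => ?_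
    have he' := Finset.mem_range.mp he
    rw [vecMul_smul']
    refine Submodule.smul_mem _ _ (Submodule.subset_span ?_)
    refine ⟨(c, (minpoly K M).natDegree - (minpoly K M).natDegree + e), ⟨by omega, ?_⟩, rfl⟩
    exact Or.inl (by show s c + _ < s c + _; omega)
  exact (hdm c).2 _ (by omega) hdep

lemma exists_P {δ : ℕ} (hδ : (minpoly K M).natDegree ≤ δ) {s : Fin m → ℕ}
    {dm : Fin m → ℕ} (hdm : IsMinDeg E M s δ dm) :
    ∃ P : Matrix (Fin m) (Fin m) (Polynomial K),
      (∀ i j, (P i j).degree ≤ (δ : WithBot ℕ)) ∧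
      (∀ c, P c ≠ 0 ∧ IsPivotIdx s (P c) c ∧ (P c c).natDegree = dm c) ∧
      (∀ c, IsInterpolant E M (P c)) := by
  classical
  have hdmle : ∀ c, dm c ≤ δ := dm_le E M hδ hdm
  have hmem := fun c => (Finsupp.mem_span_image_iff_linearCombination K).mp (hdm c).1
  choose l hl1 hl2 using hmem
  have hsupp : ∀ c y, l c y ≠ 0 → y.2 ≤ δ ∧ keyLt s y (c, dm c) := fun c y hy =>
    (Finsupp.mem_supported K (l c)).mp (hl1 c) (Finsupp.mem_support_iff.mpr hy)
  set T : Fin m → Fin m → Polynomial K :=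
    fun c c' => ∑ d ∈ Finset.range (δ + 1), C (l c (c', d)) * X ^ d with hT
  set P : Matrix (Fin m) (Fin m) (Polynomial K) :=
    fun c c' => (if c' = c then X ^ (dm c) else 0) - T c c' with hP
  have hTcoeff : ∀ c c' k, (T c c').coeff k ≠ 0 → k ≤ δ ∧ keyLt s (c', k) (c, dm c) := by
    intro c c' k hk
    rw [hT, coeff_sumCX] at hk
    by_cases h : k < δ + 1
    · rw [if_pos h] at hk
      exact ⟨by omega, (hsupp c (c', k) hk).2⟩
    · rw [if_neg h] at hk
      exact absurd rfl hk
  have hTdeg : ∀ c c', (T c c').degree ≤ (δ : WithBot ℕ) := by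
    intro c c'
    refine (degree_sum_le _ _).trans ?_
    refine Finset.sup_le fun d hd => ?_
    exact (degree_C_mul_X_pow_le d _).trans (by exact_mod_cast Nat.le_of_lt_succ (Finset.mem_range.mp hd))
  have hTdiag : ∀ c, (T c c).degree < ((dm c : ℕ) : WithBot ℕ) := by
    intro c
    rw [degree_lt_iff_coeff_zero]
    intro k hk
    by_contra hne
    have h2 := keyLt_cases (hTcoeff c c k hne).2
    have hk' : dm c ≤ k := by exact_mod_cast hk
    rcases h2 with h | ⟨h, h'⟩
    · omega
    · exact absurd h' (lt_irrefl c)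
  have hPdiagdeg : ∀ c, (P c c).degree = ((dm c : ℕ) : WithBot ℕ) := by
    intro c
    show ((if c = c then X ^ dm c else 0) - T c c).degree = _
    rw [if_pos rfl]
    rw [degree_sub_eq_left_of_degree_lt (by rw [degree_X_pow]; exact hTdiag c), degree_X_pow]
  have hPdiag0 : ∀ c, P c c ≠ 0 := by
    intro c h0
    have := hPdiagdeg c
    rw [h0, degree_zero] at this
    exact WithBot.bot_ne_coe this
  -- off-diagonal coefficient support
  have hPoff : ∀ c c', c' ≠ c → ∀ k, (P c c').coeff k ≠ 0 → keyLt s (c', k) (c, dm c) := by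
    intro c c' hne k hk
    rw [hP] at hk
    simp only [if_neg hne, zero_sub, coeff_neg, neg_ne_zero] at hk
    exact (hTcoeff c c' k hk).2
  -- off diag key bound on natDegree
  have hPoffkey : ∀ c c', c' ≠ c → P c c' ≠ 0 → keyLt s (c', (P c c').natDegree) (c, dm c) := by
    intro c c' hne h0
    exact hPoff c c' hne _ (mt leadingCoeff_eq_zero.mp h0)
  -- row degree computation
  have hrowle : ∀ c (j : Fin m), (P c j).degree + (s j : WithBot ℕ)
      ≤ ((dm c + s c : ℕ) : WithBot ℕ) := by
    intro c j
    by_cases hj : j = c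
    · subst hj
      rw [hPdiagdeg j, ← Nat.cast_add]
    · by_cases h0 : P c j = 0
      · rw [h0, degree_zero, WithBot.bot_add]
        exact bot_le
      · rw [degree_add_s h0]
        have := keyLt_cases (hPoffkey c j hj h0)
        rcases this with h | ⟨h, _⟩ <;>
          exact_mod_cast (by omega : (P c j).natDegree + s j ≤ dm c + s c)
  have hrowd : ∀ c, rowDegVec s (P c) = ((dm c + s c : ℕ) : WithBot ℕ) := by
    intro c
    refine le_antisymm (Finset.sup_le fun j _ => hrowle c j) ?_
    refine le_trans (le_of_eq ?_) (Finset.le_sup (f := fun j => (P c j).degree + (s j : WithBot ℕ))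
      (Finset.mem_univ c))
    show _ = (P c c).degree + (s c : WithBot ℕ)
    rw [hPdiagdeg c, ← Nat.cast_add]
  have hpivot : ∀ c, IsPivotIdx s (P c) c := by
    intro c
    constructor
    · rw [hrowd c, hPdiagdeg c, ← Nat.cast_add]
    · intro c' hc'
      by_contra hlt
      push_neg at hlt
      have hne : c' ≠ c := ne_of_gt hlt
      have h0 : P c c' ≠ 0 := by
        intro h0
        rw [h0, degree_zero, WithBot.bot_add, hrowd c] at hc'
        exact WithBot.bot_ne_coe hc'
      rw [degree_add_s h0, hrowd c] at hc'
      have heq : (P c c').natDegree + s c' = dm c + s c := by exact_mod_cast hc'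
      rcases keyLt_cases (hPoffkey c c' hne h0) with h | ⟨h, h'⟩
      · omega
      · exact absurd h' (not_lt_of_gt hlt)
  -- degree bounds
  have hdegP : ∀ i j, (P i j).degree ≤ (δ : WithBot ℕ) := by
    intro i j
    rw [hP]
    refine (degree_sub_le _ _).trans (max_le ?_ (hTdeg i j))
    by_cases hj : j = i
    · rw [if_pos hj, degree_X_pow]
      exact_mod_cast hdmle i
    · rw [if_neg hj, degree_zero]
      exact bot_le
  -- interpolant rows
  have hinterp : ∀ c, IsInterpolant E M (P c) := by
    intro c
    rw [IsInterpolant]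
    have hnat : ∀ c', (T c c').natDegree < δ + 1 :=
      fun c' => Nat.lt_succ_of_le (natDegree_le_iff_degree_le.mpr (hTdeg c c'))
    have hstep : ∀ c', (E c') ᵥ* (aeval M (P c c'))
        = (if c' = c then (E c) ᵥ* (M ^ (dm c)) else 0)
          - ∑ d ∈ Finset.range (δ + 1), l c (c', d) • ((E c') ᵥ* (M ^ d)) := by
      intro c'
      rw [hP]
      simp only [map_sub, Matrix.vecMul_sub]
      congr 1
      · by_cases hj : c' = c
        · subst hj
          rw [if_pos rfl, if_pos rfl, map_pow, aeval_X]
        · rw [if_neg hj, if_neg hj, map_zero, Matrix.vecMul_zero]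
      · rw [vecMul_aeval (E c') M (T c c') (hnat c')]
        refine Finset.sum_congr rfl fun d hd => ?_
        rw [hT]
        simp only []
        rw [coeff_sumCX, if_pos (Finset.mem_range.mp hd)]
    simp only [hstep]
    rw [Finset.sum_sub_distrib, Finset.sum_ite_eq' Finset.univ c
      (fun _ => (E c) ᵥ* (M ^ (dm c))), if_pos (Finset.mem_univ c)]
    rw [← Finset.sum_product']
    have hlc : ∑ y ∈ Finset.univ ×ˢ Finset.range (δ + 1),
        l c y • ((E y.1) ᵥ* (M ^ y.2)) = (E c) ᵥ* (M ^ (dm c)) := by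
      rw [← hl2 c, Finsupp.linearCombination_apply]
      have hsub : (l c).support ⊆ Finset.univ ×ˢ Finset.range (δ + 1) := by
        intro y hy
        have := (hsupp c y (Finsupp.mem_support_iff.mp hy)).1
        exact Finset.mem_product.mpr ⟨Finset.mem_univ _, Finset.mem_range.mpr (by omega)⟩
      rw [Finsupp.sum_of_support_subset (l c) hsub
        (fun y a => a • ((E y.1) ᵥ* (M ^ y.2))) (fun y _ => zero_smul K _)]
    rw [hlc, sub_self]
  refine ⟨P, hdegP, fun c => ⟨?_, hpivot c, ?_⟩, hinterp⟩
  · intro h0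
    exact hPdiag0 c (by rw [show P c c = (P c) c from rfl, h0]; rfl)
  · have := hPdiagdeg c
    exact natDegree_eq_of_degree_eq_some this

lemma exists_pivotIdx {s : Fin m → ℕ} {q : Fin m → Polynomial K} (hq0 : q ≠ 0) :
    ∃ c, IsPivotIdx s q c := by
  classical
  obtain ⟨j, hj⟩ : ∃ j, q j ≠ 0 := by
    by_contra hall; push_neg at hall; exact hq0 (funext hall)
  obtain ⟨c, _, hcs⟩ := Finset.exists_mem_eq_sup Finset.univ ⟨j, Finset.mem_univ j⟩
    (fun j => (q j).degree + (s j : WithBot ℕ))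
  set A := Finset.univ.filter
    (fun c => (q c).degree + (s c : WithBot ℕ) = rowDegVec s q) with hA
  have hAne : A.Nonempty := ⟨c, Finset.mem_filter.mpr ⟨Finset.mem_univ _, hcs.symm⟩⟩
  refine ⟨A.max' hAne, (Finset.mem_filter.mp (A.max'_mem hAne)).2, fun c' hc' => ?_⟩
  exact A.le_max' c' (Finset.mem_filter.mpr ⟨Finset.mem_univ _, hc'⟩)

noncomputable def meas {m : ℕ} (s : Fin m → ℕ) (q : Fin m → Polynomial K) : ℕ :=
  (rowDegVec s q).unbotD 0 * (m + 1) +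
    (Finset.univ.filter
      (fun c => (q c).degree + (s c : WithBot ℕ) = rowDegVec s q)).sup (fun x => (x : ℕ))

lemma meas_eq {s : Fin m → ℕ} {q : Fin m → Polynomial K} {c : Fin m}
    (hq0 : q ≠ 0) (hc : IsPivotIdx s q c) :
    meas s q = ((q c).natDegree + s c) * (m + 1) + c.val := by
  have hqc := pivot_entry_ne_zero hq0 hc
  have hrd : rowDegVec s q = (((q c).natDegree + s c : ℕ) : WithBot ℕ) := by
    rw [← hc.1, degree_add_s hqc]
  have h2 : (Finset.univ.filter
      (fun c' => (q c').degree + (s c' : WithBot ℕ) = rowDegVec s q)).sup (fun x => (x : ℕ))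
      = c.val := by
    refine le_antisymm (Finset.sup_le fun x hx => ?_)
      (Finset.le_sup (f := fun x : Fin m => (x : ℕ))
        (Finset.mem_filter.mpr ⟨Finset.mem_univ _, hc.1⟩))
    exact hc.2 x (Finset.mem_filter.mp hx).2
  rw [meas, h2, hrd]
  rfl

lemma degs_le {p : Polynomial K} {k n : ℕ} (h : p ≠ 0 → p.natDegree + k ≤ n) :
    p.degree + (k : WithBot ℕ) ≤ (n : WithBot ℕ) := by
  by_cases hp : p = 0
  · rw [hp, degree_zero, WithBot.bot_add]
    exact bot_le
  · rw [degree_add_s hp]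
    exact_mod_cast h hp

lemma hkeyP_of {s dm : Fin m → ℕ} {P : Matrix (Fin m) (Fin m) (Polynomial K)}
    (hpiv : ∀ c, P c ≠ 0 ∧ IsPivotIdx s (P c) c ∧ (P c c).natDegree = dm c) :
    ∀ j i, P j i ≠ 0 → ((P j i).natDegree + s i ≤ dm j + s j ∧
      ((P j i).natDegree + s i = dm j + s j → i ≤ j)) := by
  intro j i h0
  have hPd0 : P j j ≠ 0 := pivot_entry_ne_zero (hpiv j).1 (hpiv j).2.1
  have hrd : rowDegVec s (P j) = ((dm j + s j : ℕ) : WithBot ℕ) := by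
    rw [← (hpiv j).2.1.1, degree_add_s hPd0, (hpiv j).2.2]
  have hle : (P j i).degree + (s i : WithBot ℕ) ≤ rowDegVec s (P j) :=
    Finset.le_sup (f := fun i => (P j i).degree + (s i : WithBot ℕ)) (Finset.mem_univ i)
  rw [hrd, degree_add_s h0] at hle
  constructor
  · exact_mod_cast hle
  · intro he
    refine (hpiv j).2.1.2 i ?_
    rw [hrd, degree_add_s h0]
    exact_mod_cast he

lemma hcoeffP_of {s dm : Fin m → ℕ} {P : Matrix (Fin m) (Fin m) (Polynomial K)}
    (hpiv : ∀ c, P c ≠ 0 ∧ IsPivotIdx s (P c) c ∧ (P c c).natDegree = dm c) :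
    ∀ j i d, (P j i).coeff d ≠ 0 →
      (d + s i ≤ dm j + s j ∧ (d + s i = dm j + s j → i ≤ j)) := by
  intro j i d hd
  have h0 : P j i ≠ 0 := fun h => hd (by simp [h])
  have hdle : d ≤ (P j i).natDegree := le_natDegree_of_ne_zero hd
  obtain ⟨h1, h2⟩ := hkeyP_of hpiv j i h0
  exact ⟨by omega, fun he => h2 (by omega)⟩

lemma linIndep_of {s dm : Fin m → ℕ} {P : Matrix (Fin m) (Fin m) (Polynomial K)}
    (hpiv : ∀ c, P c ≠ 0 ∧ IsPivotIdx s (P c) c ∧ (P c c).natDegree = dm c) :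
    LinearIndependent (Polynomial K) (fun i => P i) := by
  classical
  rw [Fintype.linearIndependent_iff]
  intro g hg
  by_contra hne
  push_neg at hne
  obtain ⟨i0, hi0⟩ := hne
  set S := Finset.univ.filter (fun i => g i ≠ 0) with hS
  have hSne : S.Nonempty := ⟨i0, Finset.mem_filter.mpr ⟨Finset.mem_univ _, hi0⟩⟩
  set t := S.sup (fun j => (g j).natDegree + s j + dm j) with ht
  set A := S.filter (fun j => (g j).natDegree + s j + dm j = t) with hA2
  have hAne : A.Nonempty := by
    obtain ⟨b, hb, hbs⟩ := Finset.exists_mem_eq_sup S hSne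
      (fun j => (g j).natDegree + s j + dm j)
    exact ⟨b, Finset.mem_filter.mpr ⟨hb, hbs.symm⟩⟩
  set i := A.max' hAne with hi
  have hiA : i ∈ A := A.max'_mem hAne
  have hgi : g i ≠ 0 := (Finset.mem_filter.mp (Finset.mem_filter.mp hiA).1).2
  have hit : (g i).natDegree + s i + dm i = t := (Finset.mem_filter.mp hiA).2
  have hPii0 : P i i ≠ 0 := pivot_entry_ne_zero (hpiv i).1 (hpiv i).2.1
  set n := (g i).natDegree + dm i with hn
  have hzero : ∑ j : Fin m, g j • P j = 0 := hg
  have hcoeff : ((∑ j : Fin m, g j • P j) i).coeff n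
      = (g i).leadingCoeff * (P i i).leadingCoeff := by
    rw [Finset.sum_apply]
    simp only [Pi.smul_apply, smul_eq_mul]
    rw [finset_sum_coeff]
    rw [Finset.sum_eq_single i]
    · rw [hn, ← (hpiv i).2.2]
      exact coeff_mul_degree_add_degree _ _
    · intro j _ hji
      by_cases hgj : g j = 0
      · simp [hgj]
      by_cases hPj : P j i = 0
      · simp [hPj]
      refine coeff_eq_zero_of_natDegree_lt ?_
      rw [natDegree_mul hgj hPj]
      have h1 := hkeyP_of hpiv j i hPj
      have h2 : (g j).natDegree + s j + dm j ≤ t :=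
        Finset.le_sup (f := fun j => (g j).natDegree + s j + dm j)
          (Finset.mem_filter.mpr ⟨Finset.mem_univ _, hgj⟩)
      rcases lt_or_eq_of_le h1.1 with hlt | heq
      · omega
      · have hij : i ≤ j := h1.2 heq
        rcases lt_or_eq_of_le h2 with h3 | h3
        · omega
        · have hjA : j ∈ A := Finset.mem_filter.mpr
            ⟨Finset.mem_filter.mpr ⟨Finset.mem_univ _, hgj⟩, h3⟩
          have hjle : j ≤ i := A.le_max' j hjA
          exact absurd hij (not_le_of_gt (lt_of_le_of_ne hjle hji))
    · intro h
      exact absurd (Finset.mem_univ i) h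
  rw [hzero] at hcoeff
  simp only [Pi.zero_apply, coeff_zero] at hcoeff
  exact (mul_ne_zero (leadingCoeff_ne_zero.mpr hgi)
    (leadingCoeff_ne_zero.mpr hPii0)) hcoeff.symm

lemma interp_mem_span {δ : ℕ} (hδ : (minpoly K M).natDegree ≤ δ) {s dm : Fin m → ℕ}
    (hdm : IsMinDeg E M s δ dm) {P : Matrix (Fin m) (Fin m) (Polynomial K)}
    (hpiv : ∀ c, P c ≠ 0 ∧ IsPivotIdx s (P c) c ∧ (P c c).natDegree = dm c)
    (hint : ∀ c, IsInterpolant E M (P c)) :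
    ∀ (n : ℕ) (q : Fin m → Polynomial K), IsInterpolant E M q → meas s q ≤ n →
      q ∈ Submodule.span (Polynomial K) (Set.range fun i => P i) := by
  classical
  intro n
  induction n using Nat.strong_induction_on with
  | _ n ih =>
    intro q hq hqn
    by_cases hq0 : q = 0
    · rw [hq0]
      exact Submodule.zero_mem _
    obtain ⟨c, hc⟩ := exists_pivotIdx hq0
    have hqc : q c ≠ 0 := pivot_entry_ne_zero hq0 hc
    set e := (q c).natDegree with he
    have hedm : dm c ≤ e := pivot_natDegree_ge E M hδ hdm hq hq0 hc
    have hPcc0 : P c c ≠ 0 := pivot_entry_ne_zero (hpiv c).1 (hpiv c).2.1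
    set a := (q c).leadingCoeff / (P c c).leadingCoeff with ha
    set f := C a * X ^ (e - dm c) with hf
    set q' := q - f • P c with hq'
    have hq'int : IsInterpolant E M q' := by
      have h1 : q ∈ interpSub E M := hq
      have h2 : f • P c ∈ interpSub E M := Submodule.smul_mem _ _ (hint c)
      exact Submodule.sub_mem _ h1 h2
    have hstep : q' ∈ Submodule.span (Polynomial K) (Set.range fun i => P i) →
        q ∈ Submodule.span (Polynomial K) (Set.range fun i => P i) := by
      intro h
      have heq : q = q' + f • P c := by rw [hq']; abel
      rw [heq]
      exact Submodule.add_mem _ h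
        (Submodule.smul_mem _ _ (Submodule.subset_span ⟨c, rfl⟩))
    by_cases hq'0 : q' = 0
    · exact hstep (by rw [hq'0]; exact Submodule.zero_mem _)
    have hcancel : (q' c).coeff e = 0 := by
      rw [hq']
      simp only [Pi.sub_apply, Pi.smul_apply, smul_eq_mul, coeff_sub]
      have h1 : (f * P c c).coeff e = (q c).leadingCoeff := by
        have hcomm : f * P c c = C a * (P c c * X ^ (e - dm c)) := by rw [hf]; ring
        rw [hcomm, coeff_C_mul, coeff_mul_X_pow', if_pos (by omega)]
        have h2 : e - (e - dm c) = dm c := by omega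
        rw [h2, ← (hpiv c).2.2, coeff_natDegree, ha]
        exact div_mul_cancel₀ _ (leadingCoeff_ne_zero.mpr hPcc0)
      rw [h1]
      show (q c).coeff e - (q c).coeff (q c).natDegree = 0
      rw [← he, sub_self]
    have hbound : ∀ j d, (q' j).coeff d ≠ 0 →
        (s j + d ≤ s c + e ∧ (s j + d = s c + e → j ≤ c)) := by
      intro j d hd
      rw [hq'] at hd
      simp only [Pi.sub_apply, Pi.smul_apply, smul_eq_mul, coeff_sub] at hd
      have hor : (q j).coeff d ≠ 0 ∨ (f * P c j).coeff d ≠ 0 := by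
        by_contra hh
        push_neg at hh
        exact hd (by rw [hh.1, hh.2, sub_zero])
      have hrdq : rowDegVec s q = ((e + s c : ℕ) : WithBot ℕ) := by
        rw [← hc.1, degree_add_s hqc, ← he]
      rcases hor with h | h
      · have hqj : q j ≠ 0 := fun hh => h (by simp [hh])
        have hdle : d ≤ (q j).natDegree := le_natDegree_of_ne_zero h
        have hle : (q j).degree + (s j : WithBot ℕ) ≤ rowDegVec s q :=
          Finset.le_sup (f := fun j => (q j).degree + (s j : WithBot ℕ)) (Finset.mem_univ j)
        rw [hrdq, degree_add_s hqj] at hle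
        have h1 : (q j).natDegree + s j ≤ e + s c := by exact_mod_cast hle
        refine ⟨by omega, fun heq => ?_⟩
        refine hc.2 j ?_
        rw [hrdq, degree_add_s hqj]
        exact_mod_cast (by omega : (q j).natDegree + s j = e + s c)
      · have h' : (P c j).coeff (d - (e - dm c)) ≠ 0 ∧ (e - dm c) ≤ d := by
          have hcomm : f * P c j = C a * (P c j * X ^ (e - dm c)) := by rw [hf]; ring
          rw [hcomm, coeff_C_mul, coeff_mul_X_pow'] at h
          by_cases hh : (e - dm c) ≤ d
          · rw [if_pos hh] at h
            exact ⟨fun h0 => h (by rw [h0, mul_zero]), hh⟩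
          · rw [if_neg hh, mul_zero] at h
            exact absurd rfl h
        obtain ⟨hco, hdge⟩ := h'
        obtain ⟨h1, h2⟩ := hcoeffP_of hpiv c j (d - (e - dm c)) hco
        exact ⟨by omega, fun heq => h2 (by omega)⟩
    have hrow' : ∀ j, (q' j).degree + (s j : WithBot ℕ) ≤ ((e + s c : ℕ) : WithBot ℕ) := by
      intro j
      refine degs_le fun hp => ?_
      have := (hbound j (q' j).natDegree (mt leadingCoeff_eq_zero.mp hp)).1
      omega
    obtain ⟨c2, hc2⟩ := exists_pivotIdx hq'0
    have hq'c2 : q' c2 ≠ 0 := pivot_entry_ne_zero hq'0 hc2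
    have hle2 : (q' c2).natDegree + s c2 ≤ e + s c := by
      have h3 := hrow' c2
      rw [degree_add_s hq'c2] at h3
      exact_mod_cast h3
    have hmeasq : meas s q = (e + s c) * (m + 1) + c.val := meas_eq hq0 hc
    have hmeasq' : meas s q' = ((q' c2).natDegree + s c2) * (m + 1) + c2.val :=
      meas_eq hq'0 hc2
    have hdec : meas s q' < meas s q := by
      rcases lt_or_eq_of_le hle2 with h | h
      · rw [hmeasq, hmeasq']
        have hc2m : c2.val < m + 1 := Nat.lt_succ_of_lt c2.isLt
        nlinarith
      · have hach : s c2 + (q' c2).natDegree = s c + e := by omega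
        have hlead : (q' c2).coeff (q' c2).natDegree ≠ 0 :=
          mt leadingCoeff_eq_zero.mp hq'c2
        have hc2le : c2 ≤ c := (hbound c2 _ hlead).2 hach
        have hc2ne : c2 ≠ c := by
          intro hh
          rw [hh] at hach hlead
          have he2 : (q' c).natDegree = e := by omega
          rw [he2] at hlead
          exact hlead hcancel
        have hlt : c2.val < c.val := Fin.lt_iff_val_lt_val.mp (lt_of_le_of_ne hc2le hc2ne)
        rw [hmeasq, hmeasq', h]
        omega
    exact hstep (ih (meas s q') (lt_of_lt_of_le hdec hqn) q' hq'int le_rfl)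

end core

section part2
variable {K : Type*} [Field K] {m σ : ℕ}
variable (E : Matrix (Fin m) (Fin σ) K) (M : Matrix (Fin σ) (Fin σ) K)

lemma part2 {δ : ℕ} (hδ : (minpoly K M).natDegree ≤ δ) {s dm : Fin m → ℕ}
    (hdm : IsMinDeg E M s δ dm) (P : Matrix (Fin m) (Fin m) (Polynomial K))
    (hpiv : ∀ c, P c ≠ 0 ∧ IsPivotIdx s (P c) c ∧ (P c c).natDegree = dm c)
    (hint : ∀ c, IsInterpolant E M (P c)) :
    IsInterpBasis E M P ∧ IsReducedS s P := by
  classical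
  constructor
  · refine ⟨linIndep_of hpiv, fun q => ⟨fun hq =>
      interp_mem_span E M hδ hdm hpiv hint (meas s q) q hq le_rfl, fun hq => ?_⟩⟩
    have hle : Submodule.span (Polynomial K) (Set.range fun i => P i) ≤ interpSub E M :=
      Submodule.span_le.mpr (by rintro x ⟨i, rfl⟩; exact hint i)
    exact hle hq
  · rw [IsReducedS]
    have hdet : (leadMat s P).det ≠ 0 := by
      have htri : (leadMat s P).BlockTriangular OrderDual.toDual := by
        intro i j hij
        have hij' : i < j := hij
        show (if (P i j).degree + (s j : WithBot ℕ) = rowDegW s P i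
          then (P i j).leadingCoeff else 0) = 0
        rw [if_neg ?hne]
        case hne =>
          intro heq
          exact absurd ((hpiv i).2.1.2 j heq) (not_le_of_gt hij')
      rw [Matrix.det_of_lowerTriangular _ htri]
      refine Finset.prod_ne_zero_iff.mpr fun i _ => ?_
      show (if (P i i).degree + (s i : WithBot ℕ) = rowDegVec s (P i)
        then (P i i).leadingCoeff else 0) ≠ 0
      rw [if_pos (hpiv i).2.1.1]
      exact leadingCoeff_ne_zero.mpr (pivot_entry_ne_zero (hpiv i).1 (hpiv i).2.1)
    have hunit : IsUnit (leadMat s P) :=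
      (Matrix.isUnit_iff_isUnit_det _).mpr (isUnit_iff_ne_zero.mpr hdet)
    rw [Matrix.rank_of_isUnit _ hunit, Fintype.card_fin]

end part2

/-- there exists `P` of degree at most `δ`, in `s`-weak Popov form with
`s`-pivot entries on the diagonal and `s`-pivot degree `(δ_1,…,δ_m)`, whose rows are
interpolants for `(E,M)`; and any such `P` is an `s`-minimal interpolation basis. -/
theorem exists_weak_popov_interpolation_basis
    {K : Type*} [Field K] {m σ δ : ℕ}
    (E : Matrix (Fin m) (Fin σ) K) (M : Matrix (Fin σ) (Fin σ) K) (s : Fin m → ℕ)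
    (hδ : (minpoly K M).natDegree ≤ δ)
    (dm : Fin m → ℕ) (hdm : IsMinDeg E M s δ dm) :
    (∃ P : Matrix (Fin m) (Fin m) (Polynomial K),
      (∀ i j, (P i j).degree ≤ (δ : WithBot ℕ)) ∧
      (∀ c, P c ≠ 0 ∧ IsPivotIdx s (P c) c ∧ (P c c).natDegree = dm c) ∧
      (∀ c, IsInterpolant E M (P c)))
    ∧ (∀ P : Matrix (Fin m) (Fin m) (Polynomial K),
        (∀ i j, (P i j).degree ≤ (δ : WithBot ℕ)) →
        (∀ c, P c ≠ 0 ∧ IsPivotIdx s (P c) c ∧ (P c c).natDegree = dm c) →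
        (∀ c, IsInterpolant E M (P c)) →
        IsInterpBasis E M P ∧ IsReducedS s P) :=
  ⟨exists_P E M hδ hdm, fun P _ hpiv hint => part2 E M hδ hdm P hpiv hint⟩
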